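/- Support of the expansion of a Hankel hyperdeterminant: Let n ≥ 1 and k ≥ 1 be integers. Consider the hyperdeterminant H = Det(M) of the Hankel hypermatrix M of order 2k and dimension n with entries M(i₁,…,i_{2k}) = X_{i₁+⋯+i_{2k}}, viewed as a polynomial in the commuting variables X₀, X₁, …, X_{2k(n−1)} with rational coefficients. Then every monomial X_{λ₁}X_{λ₂}⋯X_{λ_n} occurring in H with nonzero coefficient, written with λ₁ ≤ λ₂ ≤ ⋯ ≤ λ_n, satisfies λ₁+⋯+λ_n = k·n·(n−1) and k(i−1) ≤ λ_i ≤ k(n+i−2) for each i ∈ {1,…,n}. -/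

import Mathlib

open Nat

/-- The hyperdeterminant of a hypermatrix of order `m` and dimension `n` with
entries in the polynomial ring `ℚ[X₀,…,X_{N-1}]` (where division by `n!`
is meaningful). -/
noncomputable def hypDetP {m n N : ℕ} (M : (Fin m → Fin n) → MvPolynomial (Fin N) ℚ) :
    MvPolynomial (Fin N) ℚ :=
  ((n ! : ℚ)⁻¹) • ∑ σ : Fin m → Equiv.Perm (Fin n),
    (∏ s, ((Equiv.Perm.sign (σ s) : ℤ) : ℚ)) • ∏ i, M fun s => σ s i

/-- The Hankel hypermatrix of order `2k` and dimension `n` with entries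
`X_{i₁+⋯+i₂ₖ}` in `ℚ[X₀,…,X_{2k(n-1)}]`. -/
noncomputable def hankelX (n k : ℕ) :
    (Fin (2 * k) → Fin n) → MvPolynomial (Fin (2 * k * (n - 1) + 1)) ℚ :=
  fun t => MvPolynomial.X ⟨∑ s, (t s : ℕ), by
    have h : ∀ s : Fin (2 * k), (t s : ℕ) ≤ n - 1 :=
      fun s => Nat.le_pred_of_lt (t s).isLt
    calc ∑ s, (t s : ℕ) ≤ ∑ _s : Fin (2 * k), (n - 1) :=
          Finset.sum_le_sum fun s _ => h s
      _ = 2 * k * (n - 1) := by simp [Finset.sum_const, mul_comm]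
      _ < 2 * k * (n - 1) + 1 := Nat.lt_succ_self _⟩

open Finset


lemma aux_prod_X {N : ℕ} {ι : Type*} (s : Finset ι) (f : ι → Fin N) :
    ∏ i ∈ s, (MvPolynomial.X (f i) : MvPolynomial (Fin N) ℚ)
      = MvPolynomial.monomial (∑ i ∈ s, Finsupp.single (f i) 1) 1 := by
  induction s using Finset.cons_induction with
  | empty => simp
  | cons a s ha ih =>
      rw [Finset.prod_cons, Finset.sum_cons, ih, MvPolynomial.X,
        MvPolynomial.monomial_mul, one_mul]

lemma le_of_strictMono_fin {n : ℕ} (f : Fin n → ℕ) (hf : StrictMono f) (i : Fin n) :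
    (i : ℕ) ≤ f i := by
  have key : ∀ m (i : Fin n), (i : ℕ) = m → m ≤ f i := by
    intro m
    induction m with
    | zero => intro i _; exact Nat.zero_le _
    | succ p ih =>
        intro i hi
        have hp : p < n := by omega
        have h1 := ih ⟨p, hp⟩ rfl
        have h2 : f ⟨p, hp⟩ < f i := hf (by simp [Fin.lt_def]; omega)
        omega
  exact key _ i rfl

lemma sum_range_card_le (S : Finset ℕ) : ∑ m ∈ range S.card, m ≤ ∑ x ∈ S, x := by
  classical
  have e := (S.orderIsoOfFin rfl)
  have h1 : ∑ x ∈ S, x = ∑ i : Fin S.card, ((e i : ℕ)) := by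
    rw [← Finset.sum_coe_sort S (fun x => (x : ℕ))]
    exact (Equiv.sum_comp e.toEquiv (fun x => (x : ℕ))).symm
  have h2 : ∑ m ∈ range S.card, m = ∑ i : Fin S.card, (i : ℕ) :=
    (Fin.sum_univ_eq_sum_range _ _).symm
  rw [h1, h2]
  exact Finset.sum_le_sum fun i _ => le_of_strictMono_fin (fun j => (e j : ℕ))
    (fun a b hab => by exact_mod_cast e.strictMono hab) i

lemma perm_sum_lower {n : ℕ} (σ : Equiv.Perm (Fin n)) (T : Finset (Fin n)) :
    ∑ m ∈ range T.card, m ≤ ∑ j ∈ T, (σ j : ℕ) := by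
  classical
  have hinj : Set.InjOn (fun j => (σ j : ℕ)) T :=
    fun a _ b _ h => σ.injective (Fin.val_injective h)
  have himg : ∑ j ∈ T, (σ j : ℕ) = ∑ x ∈ T.image (fun j => (σ j : ℕ)), x :=
    (Finset.sum_image (f := fun x : ℕ => x) (g := fun j : Fin n => (σ j : ℕ))
      (fun a ha b hb h => hinj ha hb h)).symm
  have hcard : (T.image (fun j => (σ j : ℕ))).card = T.card :=
    Finset.card_image_of_injOn hinj
  rw [himg, ← hcard]
  exact sum_range_card_le _

lemma perm_sum_upper {n : ℕ} (σ : Equiv.Perm (Fin n)) (T : Finset (Fin n)) :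
    ∑ j ∈ T, (σ j : ℕ) + ∑ m ∈ range (n - T.card), m ≤ ∑ m ∈ range n, m := by
  classical
  have hsplit : ∑ j ∈ T, (σ j : ℕ) + ∑ j ∈ Tᶜ, (σ j : ℕ) = ∑ m ∈ range n, m := by
    rw [Finset.sum_add_sum_compl, Equiv.sum_comp σ (fun j : Fin n => (j : ℕ))]
    exact Fin.sum_univ_eq_sum_range (fun m => m) n
  have hcard : Tᶜ.card = n - T.card := by
    rw [Finset.card_compl, Fintype.card_fin]
  have := perm_sum_lower σ Tᶜ
  rw [hcard] at this
  omega

lemma nat_id1 (a t : ℕ) : (a + t + 1) * (a + t) = a * (a - 1) + (t + 1) * (2 * a + t) := by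
  cases a with
  | zero => ring_nf
  | succ a' => simp only [Nat.succ_sub_one]; ring


/-- Support of the expansion of a Hankel hyperdeterminant: every monomial
`X_{λ₁}⋯X_{λₙ}` (with `λ₁ ≤ ⋯ ≤ λₙ`) occurring with nonzero coefficient
satisfies `λ₁+⋯+λₙ = k n (n-1)` and `k(i-1) ≤ λᵢ ≤ k(n+i-2)` (here the sorted
tuple `λ` is indexed by `Fin n`, so `λᵢ` for `i ∈ {0,…,n-1}` must satisfy
`k·i ≤ λᵢ ≤ k(n+i-1)`). -/
theorem hankel_hypDet_support (n k : ℕ) (hn : 1 ≤ n) (hk : 1 ≤ k)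
    (d : Fin (2 * k * (n - 1) + 1) →₀ ℕ)
    (hd : MvPolynomial.coeff d (hypDetP (hankelX n k)) ≠ 0) :
    ∃ lam : Fin n → Fin (2 * k * (n - 1) + 1),
      Monotone lam ∧
      d = ∑ i : Fin n, Finsupp.single (lam i) 1 ∧
      (∑ i : Fin n, (lam i : ℕ)) = k * n * (n - 1) ∧
      (∀ i : Fin n, k * (i : ℕ) ≤ (lam i : ℕ) ∧ (lam i : ℕ) ≤ k * (n + (i : ℕ) - 1)) := by
  classical
  -- Step 1: extract a permutation tuple contributing to the coefficient
  obtain ⟨σ, hσ⟩ : ∃ σ : Fin (2 * k) → Equiv.Perm (Fin n),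
      MvPolynomial.coeff d (∏ i, hankelX n k fun s => σ s i) ≠ 0 := by
    by_contra h
    push_neg at h
    apply hd
    have hz : ∀ σ : Fin (2 * k) → Equiv.Perm (Fin n),
        MvPolynomial.coeff d
          ((∏ s, ((Equiv.Perm.sign (σ s) : ℤ) : ℚ)) •
            ∏ i, hankelX n k fun s => σ s i) = 0 := by
      intro σ
      rw [MvPolynomial.coeff_smul, h σ, smul_zero]
    unfold hypDetP
    rw [MvPolynomial.coeff_smul, MvPolynomial.coeff_sum]
    simp [hz]
  -- Step 2: the bottom row sums
  have hbN : ∀ i : Fin n, (∑ s, ((σ s i : ℕ))) < 2 * k * (n - 1) + 1 := by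
    intro i
    have h1 : ∑ s : Fin (2 * k), (σ s i : ℕ) ≤ ∑ _s : Fin (2 * k), (n - 1) :=
      Finset.sum_le_sum fun s _ => Nat.le_pred_of_lt (σ s i).isLt
    simp only [Finset.sum_const, smul_eq_mul, Finset.card_univ, Fintype.card_fin] at h1
    exact Nat.lt_succ_of_le h1
  set bF : Fin n → Fin (2 * k * (n - 1) + 1) :=
    fun i => ⟨∑ s, (σ s i : ℕ), hbN i⟩ with hbF
  have hprod : (∏ i, hankelX n k fun s => σ s i)
      = MvPolynomial.monomial (∑ i, Finsupp.single (bF i) 1) (1 : ℚ) := by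
    rw [← aux_prod_X]
    rfl
  have hdd : d = ∑ i, Finsupp.single (bF i) 1 := by
    rw [hprod, MvPolynomial.coeff_monomial] at hσ
    by_contra hne
    rw [if_neg (fun hh => hne hh.symm)] at hσ
    exact hσ rfl
  -- Step 3: sort
  set π : Equiv.Perm (Fin n) := Tuple.sort bF with hπ
  refine ⟨bF ∘ π, Tuple.monotone_sort bF, ?_, ?_, ?_⟩
  · rw [hdd]
    exact (Equiv.sum_comp π (fun j => Finsupp.single (bF j) 1)).symm
  · -- total sum
    have h1 : ∑ i : Fin n, ((bF ∘ π) i : ℕ) = ∑ i : Fin n, (bF i : ℕ) :=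
      Equiv.sum_comp π (fun j => (bF j : ℕ))
    have h2 : ∑ i : Fin n, (bF i : ℕ) = ∑ s : Fin (2 * k), ∑ i : Fin n, (σ s i : ℕ) := by
      rw [Finset.sum_comm]
    have h3 : ∀ s : Fin (2 * k), ∑ i : Fin n, (σ s i : ℕ) = ∑ m ∈ range n, m := by
      intro s
      rw [Equiv.sum_comp (σ s) (fun j : Fin n => (j : ℕ))]
      exact Fin.sum_univ_eq_sum_range (fun m => m) n
    have hS : (∑ m ∈ range n, m) * 2 = n * (n - 1) := Finset.sum_range_id_mul_two n
    rw [h1, h2]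
    simp only [h3, Finset.sum_const, Finset.card_univ, Fintype.card_fin, smul_eq_mul]
    calc 2 * k * (∑ m ∈ range n, m) = k * ((∑ m ∈ range n, m) * 2) := by ring
      _ = k * (n * (n - 1)) := by rw [hS]
      _ = k * n * (n - 1) := by ring
  · -- bounds
    intro i
    set a : ℕ := (i : ℕ) with ha
    have hmono : Monotone (bF ∘ π) := Tuple.monotone_sort bF
    constructor
    · -- lower bound
      set T : Finset (Fin n) := (Finset.Iic i).image π with hT
      have hTcard : T.card = a + 1 := by
        rw [hT, Finset.card_image_of_injective _ π.injective, Fin.card_Iic]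
      have hsum_T : ∑ j ∈ T, ∑ s, (σ s j : ℕ) = ∑ j ∈ Finset.Iic i, ((bF ∘ π) j : ℕ) := by
        rw [hT]
        exact Finset.sum_image (f := fun j : Fin n => ∑ s, (σ s j : ℕ))
          (g := π) (fun x _ y _ h => π.injective h)
      have hle : ∑ j ∈ Finset.Iic i, ((bF ∘ π) j : ℕ) ≤ (a + 1) * ((bF ∘ π) i : ℕ) := by
        calc ∑ j ∈ Finset.Iic i, ((bF ∘ π) j : ℕ)
            ≤ ∑ _j ∈ Finset.Iic i, ((bF ∘ π) i : ℕ) :=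
              Finset.sum_le_sum fun j hj => hmono (Finset.mem_Iic.mp hj)
          _ = (a + 1) * ((bF ∘ π) i : ℕ) := by
              rw [Finset.sum_const, Fin.card_Iic, smul_eq_mul]
      have hge : 2 * k * (∑ m ∈ range (a + 1), m) ≤ ∑ j ∈ T, ∑ s, (σ s j : ℕ) := by
        rw [Finset.sum_comm]
        calc 2 * k * (∑ m ∈ range (a + 1), m)
            = ∑ _s : Fin (2 * k), (∑ m ∈ range (a + 1), m) := by
              rw [Finset.sum_const, Finset.card_univ, Fintype.card_fin, smul_eq_mul]
          _ ≤ ∑ s : Fin (2 * k), ∑ j ∈ T, (σ s j : ℕ) := by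
              refine Finset.sum_le_sum fun s _ => ?_
              have := perm_sum_lower (σ s) T
              rwa [hTcard] at this
      have hSa : (∑ m ∈ range (a + 1), m) * 2 = (a + 1) * a := by
        rw [Finset.sum_range_id_mul_two]
        simp
      have hkey : (a + 1) * (k * a) ≤ (a + 1) * ((bF ∘ π) i : ℕ) := by
        have e1 : 2 * k * (∑ m ∈ range (a + 1), m) = (a + 1) * (k * a) := by
          calc 2 * k * (∑ m ∈ range (a + 1), m)
              = k * ((∑ m ∈ range (a + 1), m) * 2) := by ring
            _ = k * ((a + 1) * a) := by rw [hSa]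
            _ = (a + 1) * (k * a) := by ring
        rw [← e1]
        exact le_trans hge (le_trans (le_of_eq hsum_T) hle)
      exact Nat.le_of_mul_le_mul_left hkey (Nat.succ_pos a)
    · -- upper bound
      have han : a < n := i.isLt
      obtain ⟨t, hnt⟩ : ∃ t, n = a + t + 1 := ⟨n - a - 1, by omega⟩
      set T : Finset (Fin n) := (Finset.Ici i).image π with hT
      have hTcard : T.card = t + 1 := by
        rw [hT, Finset.card_image_of_injective _ π.injective, Fin.card_Ici]
        omega
      have hsum_T : ∑ j ∈ T, ∑ s, (σ s j : ℕ) = ∑ j ∈ Finset.Ici i, ((bF ∘ π) j : ℕ) := by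
        rw [hT]
        exact Finset.sum_image (f := fun j : Fin n => ∑ s, (σ s j : ℕ))
          (g := π) (fun x _ y _ h => π.injective h)
      have hge : (t + 1) * ((bF ∘ π) i : ℕ) ≤ ∑ j ∈ Finset.Ici i, ((bF ∘ π) j : ℕ) := by
        calc (t + 1) * ((bF ∘ π) i : ℕ)
            = ∑ _j ∈ Finset.Ici i, ((bF ∘ π) i : ℕ) := by
              rw [Finset.sum_const, Fin.card_Ici, smul_eq_mul]
              congr 1
              omega
          _ ≤ ∑ j ∈ Finset.Ici i, ((bF ∘ π) j : ℕ) :=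
              Finset.sum_le_sum fun j hj => hmono (Finset.mem_Ici.mp hj)
      have hup : ∑ j ∈ T, ∑ s, (σ s j : ℕ) + 2 * k * (∑ m ∈ range a, m)
          ≤ 2 * k * (∑ m ∈ range n, m) := by
        rw [Finset.sum_comm]
        have hstep : ∀ s : Fin (2 * k),
            ∑ j ∈ T, (σ s j : ℕ) + (∑ m ∈ range a, m) ≤ ∑ m ∈ range n, m := by
          intro s
          have := perm_sum_upper (σ s) T
          rw [hTcard] at this
          have hna : n - (t + 1) = a := by omega
          rwa [hna] at this
        calc ∑ s : Fin (2 * k), ∑ j ∈ T, (σ s j : ℕ) + 2 * k * (∑ m ∈ range a, m)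
            = ∑ s : Fin (2 * k), (∑ j ∈ T, (σ s j : ℕ) + (∑ m ∈ range a, m)) := by
              rw [Finset.sum_add_distrib, Finset.sum_const, Finset.card_univ,
                Fintype.card_fin, smul_eq_mul]
          _ ≤ ∑ _s : Fin (2 * k), (∑ m ∈ range n, m) :=
              Finset.sum_le_sum fun s _ => hstep s
          _ = 2 * k * (∑ m ∈ range n, m) := by
              rw [Finset.sum_const, Finset.card_univ, Fintype.card_fin, smul_eq_mul]
      have hSa : (∑ m ∈ range a, m) * 2 = a * (a - 1) := Finset.sum_range_id_mul_two a
      have hSn : (∑ m ∈ range n, m) * 2 = n * (n - 1) := Finset.sum_range_id_mul_two n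
      have hnn : n * (n - 1) = a * (a - 1) + (t + 1) * (2 * a + t) := by
        rw [hnt]
        have : a + t + 1 - 1 = a + t := by omega
        rw [this]
        exact nat_id1 a t
      have e1 : 2 * k * (∑ m ∈ range n, m)
          = k * (a * (a - 1)) + (t + 1) * (k * (2 * a + t)) := by
        calc 2 * k * (∑ m ∈ range n, m) = k * ((∑ m ∈ range n, m) * 2) := by ring
          _ = k * (a * (a - 1) + (t + 1) * (2 * a + t)) := by rw [hSn, hnn]
          _ = k * (a * (a - 1)) + (t + 1) * (k * (2 * a + t)) := by ring
      have e2 : 2 * k * (∑ m ∈ range a, m) = k * (a * (a - 1)) := by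
        calc 2 * k * (∑ m ∈ range a, m) = k * ((∑ m ∈ range a, m) * 2) := by ring
          _ = k * (a * (a - 1)) := by rw [hSa]
      have hkey : (t + 1) * ((bF ∘ π) i : ℕ) ≤ (t + 1) * (k * (2 * a + t)) := by
        have h5 : (t + 1) * ((bF ∘ π) i : ℕ) + 2 * k * (∑ m ∈ range a, m)
            ≤ 2 * k * (∑ m ∈ range n, m) :=
          le_trans (add_le_add_left (le_trans hge (le_of_eq hsum_T.symm)) _) hup
        omega
      have hfin : ((bF ∘ π) i : ℕ) ≤ k * (2 * a + t) :=
        Nat.le_of_mul_le_mul_left hkey (Nat.succ_pos t)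
      have : k * (n + a - 1) = k * (2 * a + t) := by
        congr 1
        omega
      rw [this]
      exact hfin
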